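/- Let C : ℝ → Sym(V) be continuous and Löwner-nondecreasing on a finite-dimensional inner product space V, with each C(s) positive semidefinite, and let α : [0,T] → ℝ be C¹ with α̇ ≤ 0, and ε : [0,T] → V be C¹. Then ∫₀^T C(α(t))(ε(t), ε̇(t)) dt ≥ (1/2) C(α(T))(ε(T), ε(T)) - (1/2) C(α(0))(ε(0), ε(0)). -/

import Mathlib

/-- Continuous-time energy inequality: for `C : ℝ → Sym(V)` continuous,
Löwner-nondecreasing and pointwise positive semidefinite, `α` C¹ with `α̇ ≤ 0`
and `ε` C¹,
`∫₀ᵀ C(α(t))(ε(t), ε̇(t)) dt ≥ (1/2)C(α(T))(ε(T),ε(T)) - (1/2)C(α(0))(ε(0),ε(0))`. -/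
theorem stmt17 {V : Type*} [NormedAddCommGroup V] [InnerProductSpace ℝ V]
    [FiniteDimensional ℝ V]
    (C : ℝ → V →ₗ[ℝ] V →ₗ[ℝ] ℝ)
    (hCcont : ∀ x y : V, Continuous fun s => C s x y)
    (hsymm : ∀ (s : ℝ) (x y : V), C s x y = C s y x)
    (hpsd : ∀ (s : ℝ) (x : V), 0 ≤ C s x x)
    (hmono : ∀ a b : ℝ, a ≤ b → ∀ x : V, C a x x ≤ C b x x)
    (T : ℝ) (hT : 0 < T) (α α' : ℝ → ℝ)
    (hα : ∀ t ∈ Set.Icc (0 : ℝ) T, HasDerivAt α (α' t) t)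
    (hα'c : ContinuousOn α' (Set.Icc (0 : ℝ) T))
    (hα' : ∀ t ∈ Set.Icc (0 : ℝ) T, α' t ≤ 0)
    (ε ε' : ℝ → V)
    (hε : ∀ t ∈ Set.Icc (0 : ℝ) T, HasDerivAt ε (ε' t) t)
    (hε'c : ContinuousOn ε' (Set.Icc (0 : ℝ) T)) :
    (1 / 2) * C (α T) (ε T) (ε T) - (1 / 2) * C (α 0) (ε 0) (ε 0)
      ≤ ∫ t in (0 : ℝ)..T, C (α t) (ε t) (ε' t) := by
  classical
  -- joint continuity of (s, x, y) ↦ C s x y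
  set Φ : ℝ × V × V → ℝ := fun p => C p.1 p.2.1 p.2.2 with hΦdef
  have hΦc : Continuous Φ := by
    have b := Module.finBasis ℝ V
    have expand : ∀ (s : ℝ) (x y : V),
        C s x y = ∑ i, ∑ j, b.repr x i * (b.repr y j * C s (b i) (b j)) := by
      intro s x y
      conv_lhs => rw [← b.sum_repr x, ← b.sum_repr y]
      simp only [map_sum, map_smul, LinearMap.sum_apply, LinearMap.smul_apply, smul_eq_mul,
        Finset.mul_sum]
      rw [Finset.sum_comm]
      exact Finset.sum_congr rfl fun i _ => Finset.sum_congr rfl fun j _ => by ring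
    have hcoord : ∀ i, Continuous fun x : V => b.repr x i := fun i =>
      (b.coord i).continuous_of_finiteDimensional
    have : Φ = fun p => ∑ i, ∑ j, b.repr p.2.1 i * (b.repr p.2.2 j * C p.1 (b i) (b j)) := by
      funext p; exact expand _ _ _
    rw [this]
    exact continuous_finset_sum _ fun i _ => continuous_finset_sum _ fun j _ =>
      ((hcoord i).comp (continuous_snd.fst)).mul
        (((hcoord j).comp (continuous_snd.snd)).mul ((hCcont _ _).comp continuous_fst))
  have hαc : ContinuousOn α (Set.Icc 0 T) := fun t ht =>
    (hα t ht).continuousAt.continuousWithinAt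
  have hεc : ContinuousOn ε (Set.Icc 0 T) := fun t ht =>
    (hε t ht).continuousAt.continuousWithinAt
  -- α is antitone on [0, T]
  have hanti : AntitoneOn α (Set.Icc 0 T) := by
    apply antitoneOn_of_deriv_nonpos (convex_Icc 0 T) hαc
    · intro x hx
      rw [interior_Icc] at hx
      exact (hα x (Set.mem_Icc_of_Ioo hx)).differentiableAt.differentiableWithinAt
    · intro x hx
      rw [interior_Icc] at hx
      rw [(hα x (Set.mem_Icc_of_Ioo hx)).deriv]
      exact hα' x (Set.mem_Icc_of_Ioo hx)
  -- clamp onto [0, T]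
  set π : ℝ → ℝ := fun t => max 0 (min t T) with hπdef
  have hπc : Continuous π := continuous_const.max (continuous_id.min continuous_const)
  have hπmem : ∀ t, π t ∈ Set.Icc (0 : ℝ) T := fun t =>
    ⟨le_max_left _ _, max_le hT.le (min_le_right _ _)⟩
  have hπid : ∀ t ∈ Set.Icc (0 : ℝ) T, π t = t := fun t ht => by
    simp only [hπdef, min_eq_left ht.2, max_eq_right ht.1]
  set g : ℝ → ℝ := fun t => C (α (π t)) (ε (π t)) (ε' (π t)) with hgdef
  have hgc : Continuous g := by
    have h1 : Continuous fun t => α (π t) := hαc.comp_continuous hπc hπmem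
    have h2 : Continuous fun t => ε (π t) := hεc.comp_continuous hπc hπmem
    have h3 : Continuous fun t => ε' (π t) := hε'c.comp_continuous hπc hπmem
    exact hΦc.comp (h1.prodMk (h2.prodMk h3))
  set f : ℝ → ℝ := fun t => (1 / 2) * C (α t) (ε t) (ε t) with hfdef
  have hfc : ContinuousOn f (Set.Icc 0 T) :=
    continuousOn_const.mul (by simpa [Function.comp_def] using hΦc.comp_continuousOn (hαc.prodMk (hεc.prodMk hεc)))
  set B : ℝ → ℝ := fun t => f 0 + ∫ u in (0 : ℝ)..t, g u with hBdef
  have hBd : ∀ x : ℝ, HasDerivAt B (g x) x := fun x =>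
    ((hgc.integral_hasStrictDerivAt 0 x).hasDerivAt).const_add (f 0)
  -- the key slope bound
  have bound : ∀ x ∈ Set.Ico (0 : ℝ) T, ∀ r, g x < r →
      ∃ᶠ z in nhdsWithin x (Set.Ioi x), slope f x z < r := by
    intro x hx r hr
    have hxI : x ∈ Set.Icc (0 : ℝ) T := ⟨hx.1, hx.2.le⟩
    set F := nhdsWithin x (Set.Ioo x T) with hFdef
    have hFne : F.NeBot := by
      have hxc : x ∈ closure (Set.Ioo x T) := by
        rw [closure_Ioo hx.2.ne]; exact ⟨le_refl x, hx.2.le⟩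
      exact mem_closure_iff_nhdsWithin_neBot.1 hxc
    have hFle : F ≤ nhdsWithin x (Set.Ioi x) :=
      nhdsWithin_mono x Set.Ioo_subset_Ioi_self
    have hα_t : Filter.Tendsto α F (nhds (α x)) :=
      ((hα x hxI).continuousAt.tendsto).mono_left nhdsWithin_le_nhds
    have hε_t : Filter.Tendsto ε F (nhds (ε x)) :=
      ((hε x hxI).continuousAt.tendsto).mono_left nhdsWithin_le_nhds
    have hslope : Filter.Tendsto (slope ε x) F (nhds (ε' x)) := by
      refine (hasDerivAt_iff_tendsto_slope.1 (hε x hxI)).mono_left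
        (nhdsWithin_mono x fun z hz => ?_)
      exact hz.1.ne'
    have htuple : Filter.Tendsto (fun z => (α z, (ε z + ε x, slope ε x z))) F
        (nhds (α x, (ε x + ε x, ε' x))) :=
      hα_t.prodMk_nhds ((hε_t.add tendsto_const_nhds).prodMk_nhds hslope)
    have hq : Filter.Tendsto (fun z => (1 / 2) * Φ (α z, ε z + ε x, slope ε x z)) F
        (nhds ((1 / 2) * Φ (α x, ε x + ε x, ε' x))) :=
      ((hΦc.tendsto _).comp htuple).const_mul (1 / 2)
    have hval : (1 / 2) * Φ (α x, ε x + ε x, ε' x) = g x := by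
      have : π x = x := hπid x hxI
      simp only [hΦdef, hgdef, this, map_add, LinearMap.add_apply]
      ring
    rw [hval] at hq
    have h1 : ∀ᶠ z in F, (1 / 2) * Φ (α z, ε z + ε x, slope ε x z) < r :=
      hq.eventually (Filter.Tendsto.eventually_lt_const hr Filter.tendsto_id)
    have h2 : ∀ᶠ z in F, z ∈ Set.Ioo x T := eventually_mem_nhdsWithin
    have hev : ∀ᶠ z in F, slope f x z < r := by
      filter_upwards [h1, h2] with z hz1 hz2
      refine lt_of_le_of_lt ?_ hz1
      have hzI : z ∈ Set.Icc (0 : ℝ) T := ⟨le_trans hx.1 hz2.1.le, hz2.2.le⟩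
      have hzx : (0 : ℝ) < z - x := sub_pos.2 hz2.1
      have hαz : α z ≤ α x := hanti hxI hzI hz2.1.le
      have hCle : C (α z) (ε x) (ε x) ≤ C (α x) (ε x) (ε x) := hmono _ _ hαz _
      have expand2 : C (α z) (ε z + ε x) (ε z - ε x)
          = C (α z) (ε z) (ε z) - C (α z) (ε x) (ε x) := by
        simp only [map_add, map_sub, LinearMap.add_apply, LinearMap.sub_apply]
        rw [hsymm (α z) (ε x) (ε z)]
        ring
      have hnum : f z - f x ≤ (1 / 2) * C (α z) (ε z + ε x) (ε z - ε x) := by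
        simp only [hfdef]
        rw [expand2]
        linarith
      have hrhs : (1 / 2) * Φ (α z, ε z + ε x, slope ε x z)
          = (z - x)⁻¹ * ((1 / 2) * C (α z) (ε z + ε x) (ε z - ε x)) := by
        simp only [hΦdef, slope, vsub_eq_sub, map_smul, smul_eq_mul]
        ring
      rw [hrhs, slope_def_field, div_eq_inv_mul]
      exact mul_le_mul_of_nonneg_left hnum (inv_nonneg.2 hzx.le)
    exact (hev.frequently).filter_mono hFle
  have key : f T ≤ B T := by
    refine image_le_of_liminf_slope_right_le_deriv_boundary hfc ?_ ?_ ?_ bound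
      (Set.right_mem_Icc.2 hT.le)
    · simp [hBdef]
    · exact fun x _ => (hBd x).continuousAt.continuousWithinAt
    · exact fun x _ => (hBd x).hasDerivWithinAt
  have hint : (∫ u in (0 : ℝ)..T, g u) = ∫ t in (0 : ℝ)..T, C (α t) (ε t) (ε' t) := by
    refine intervalIntegral.integral_congr fun t ht => ?_
    rw [Set.uIcc_of_le hT.le] at ht
    simp only [hgdef, hπid t ht]
  have hBT : B T = f 0 + ∫ t in (0 : ℝ)..T, C (α t) (ε t) (ε' t) := by
    rw [hBdef]; simp only [hint]
  rw [hBT] at key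
  simp only [hfdef] at key
  linarith
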